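/- For every real M > −1/(3√3), set t_A(M) = (1 + √(1 + 3√3·M))/√3 and define β̂_M(t) = (1/3)(3/2 − √(W_M(t))/t − W_M'(t)/(4√(W_M(t)))) on (t₊(M), ∞). Then t₊(M) < t_A(M), β̂_M(t_A(M)) = 0, β̂_M(t) < 0 for all t ∈ (t₊(M), t_A(M)), and β̂_M(t) > 0 for all t > t_A(M). (The hypersurface t = t_A(M) is the apparent horizon of the explicit cone-exterior solution, and (t₊(M), t_A(M)) is its trapped region.) -/

import Mathlib

noncomputable def Whp (M t : ℝ) : ℝ := t ^ 2 - 1 - 2 * M / t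

noncomputable def Whp' (M t : ℝ) : ℝ := 2 * t + 2 * M / t ^ 2

/-- `β̂_M`, the renormalized self-similar quantity of the explicit cone-exterior
(Wick-rotated) solution. -/
noncomputable def betaW (M t : ℝ) : ℝ :=
  (1 / 3) * (3 / 2 - Real.sqrt (Whp M t) / t - Whp' M t / (4 * Real.sqrt (Whp M t)))

/-- The cubic `t³ - t - 2M` is positive strictly above its greatest root. -/
lemma hp_cubic_pos (M tp : ℝ) (htp : IsGreatest {s : ℝ | s ^ 3 - s - 2 * M = 0} tp) :
    ∀ t, tp < t → 0 < t ^ 3 - t - 2 * M := by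
  intro t ht
  by_contra h
  push_neg at h
  have hne : t ^ 3 - t - 2 * M ≠ 0 := fun h0 => absurd (htp.2 h0) (not_le.mpr ht)
  have hlt : t ^ 3 - t - 2 * M < 0 := lt_of_le_of_ne h hne
  set X := max t (|2 * M| + 2) with hX
  have hX1 : t ≤ X := le_max_left _ _
  have hX2 : |2 * M| + 2 ≤ X := le_max_right _ _
  have h2 : (2:ℝ) ≤ X := le_trans (by nlinarith [abs_nonneg (2 * M)]) hX2
  have hx0 : (0:ℝ) ≤ X := by linarith
  have habs : 2 * M ≤ |2 * M| := le_abs_self _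
  have hXpos : 0 < X ^ 3 - X - 2 * M := by
    nlinarith [mul_nonneg (mul_nonneg (sub_nonneg.2 h2) hx0) hx0,
      mul_nonneg (sub_nonneg.2 h2) hx0, habs, hX2, abs_nonneg (2 * M)]
  have hcont : ContinuousOn (fun s : ℝ => s ^ 3 - s - 2 * M) (Set.Icc t X) := by fun_prop
  obtain ⟨r, hrmem, hr0⟩ := intermediate_value_Icc hX1 hcont ⟨hlt.le, hXpos.le⟩
  exact absurd (htp.2 hr0) (not_le.mpr (lt_of_lt_of_le ht hrmem.1))

/-- The greatest root of the cubic lies strictly above `1/√3`. -/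
lemma hp_tp_gt (M tp : ℝ) (hM : -1 / (3 * Real.sqrt 3) < M)
    (htp : IsGreatest {s : ℝ | s ^ 3 - s - 2 * M = 0} tp) :
    1 / Real.sqrt 3 < tp := by
  have h3 : Real.sqrt 3 * Real.sqrt 3 = 3 := Real.mul_self_sqrt (by norm_num)
  have h3pos : (0:ℝ) < Real.sqrt 3 := Real.sqrt_pos.mpr (by norm_num)
  set a := 1 / Real.sqrt 3 with ha
  have ha_pos : 0 < a := by positivity
  have hfa : a ^ 3 - a - 2 * M < 0 := by
    have h1 : a ^ 3 - a - 2 * M = -2 / (3 * Real.sqrt 3) - 2 * M := by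
      rw [ha]; field_simp; nlinarith [h3, h3pos]
    have h2 : -2 / (3 * Real.sqrt 3) = 2 * (-1 / (3 * Real.sqrt 3)) := by ring
    rw [h1, h2]; linarith
  set X := max a (|2 * M| + 2) with hX
  have hX1 : a ≤ X := le_max_left _ _
  have hX2 : |2 * M| + 2 ≤ X := le_max_right _ _
  have h2 : (2:ℝ) ≤ X := le_trans (by nlinarith [abs_nonneg (2 * M)]) hX2
  have hx0 : (0:ℝ) ≤ X := by linarith
  have habs : 2 * M ≤ |2 * M| := le_abs_self _
  have hXpos : 0 < X ^ 3 - X - 2 * M := by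
    nlinarith [mul_nonneg (mul_nonneg (sub_nonneg.2 h2) hx0) hx0,
      mul_nonneg (sub_nonneg.2 h2) hx0, habs, hX2, abs_nonneg (2 * M)]
  have hcont : ContinuousOn (fun s : ℝ => s ^ 3 - s - 2 * M) (Set.Icc a X) := by fun_prop
  obtain ⟨r, hrmem, hr0⟩ := intermediate_value_Icc hX1 hcont ⟨hfa.le, hXpos.le⟩
  have hra : a < r := lt_of_le_of_ne hrmem.1 (by rintro rfl; exact absurd hr0 hfa.ne)
  exact lt_of_lt_of_le hra (htp.2 hr0)

/-- On the region where the cubic is positive, `β̂_M(t)` is a positive multiple of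
`√3 t² - 2t - 3M`. -/
lemma hp_key_sign (M t : ℝ) (hM : -1 / (3 * Real.sqrt 3) < M)
    (ht1 : 1 / Real.sqrt 3 < t) (hc : 0 < t ^ 3 - t - 2 * M) :
    ∃ C : ℝ, 0 < C ∧
      betaW M t = C * (Real.sqrt 3 * t ^ 2 - 2 * t - 3 * M) := by
  have h3 : Real.sqrt 3 * Real.sqrt 3 = 3 := Real.mul_self_sqrt (by norm_num)
  have h3pos : (0:ℝ) < Real.sqrt 3 := Real.sqrt_pos.mpr (by norm_num)
  have ht0 : 0 < t := lt_trans (by positivity) ht1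
  have hst : 1 < Real.sqrt 3 * t := by
    have := (div_lt_iff₀ h3pos).mp ht1
    linarith [this]
  have ht2 : 1 < 3 * t ^ 2 := by nlinarith [hst, h3]
  have hW : 0 < Whp M t := by
    have hWeq : Whp M t = (t ^ 3 - t - 2 * M) / t := by
      unfold Whp; field_simp
    rw [hWeq]; exact div_pos hc ht0
  set s := Real.sqrt (Whp M t) with hs_def
  have hs : 0 < s := Real.sqrt_pos.mpr hW
  have hs2 : s ^ 2 = Whp M t := Real.sq_sqrt hW.le
  have hstq : s ^ 2 * t = t ^ 3 - t - 2 * M := by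
    rw [hs2]; unfold Whp; field_simp
  have hMlb : -1 < 3 * Real.sqrt 3 * M := by
    have := (div_lt_iff₀ (by positivity : (0:ℝ) < 3 * Real.sqrt 3)).mp hM
    nlinarith [this]
  have hQ : 0 < Real.sqrt 3 * t ^ 2 + 2 * t + 3 * M := by
    nlinarith [hst, h3, hMlb, h3pos, ht0, mul_pos h3pos ht0]
  have hBt : 0 < 3 * t ^ 3 - 2 * t - 3 * M := by nlinarith [hc, ht2, ht0]
  have hGid : (3 * t ^ 2 * s - (3 * t ^ 3 - 2 * t - 3 * M)) *
      (3 * t ^ 2 * s + (3 * t ^ 3 - 2 * t - 3 * M)) =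
      (Real.sqrt 3 * t ^ 2 - 2 * t - 3 * M) * (Real.sqrt 3 * t ^ 2 + 2 * t + 3 * M) := by
    linear_combination (9 * t ^ 3) * hstq - t ^ 4 * h3
  have hD1 : 0 < 3 * t ^ 2 * s + (3 * t ^ 3 - 2 * t - 3 * M) := by positivity
  have hbeta : betaW M t = (3 * t ^ 2 * s - (3 * t ^ 3 - 2 * t - 3 * M)) / (6 * t ^ 2 * s) := by
    unfold betaW Whp'
    rw [← hs_def]
    field_simp
    linear_combination (-48) * hstq
  refine ⟨(Real.sqrt 3 * t ^ 2 + 2 * t + 3 * M) /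
      ((3 * t ^ 2 * s + (3 * t ^ 3 - 2 * t - 3 * M)) * (6 * t ^ 2 * s)), by positivity, ?_⟩
  rw [hbeta]
  rw [div_mul_eq_mul_div, div_eq_div_iff (by positivity) (by positivity)]
  linear_combination (6 * t ^ 2 * s) * hGid

/-- For every `M > −1/(3√3)`, with `t_A(M) = (1 + √(1 + 3√3·M))/√3`:
`t₊(M) < t_A(M)`, `β̂_M(t_A(M)) = 0`, `β̂_M < 0` on `(t₊(M), t_A(M))`, and `β̂_M > 0`
on `(t_A(M), ∞)`. -/
theorem apparent_horizon_of_explicit_solution (M : ℝ)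
    (hM : -1 / (3 * Real.sqrt 3) < M) (tp : ℝ)
    (htp : IsGreatest {s : ℝ | s ^ 3 - s - 2 * M = 0} tp) :
    tp < (1 + Real.sqrt (1 + 3 * Real.sqrt 3 * M)) / Real.sqrt 3 ∧
    betaW M ((1 + Real.sqrt (1 + 3 * Real.sqrt 3 * M)) / Real.sqrt 3) = 0 ∧
    (∀ t : ℝ, tp < t → t < (1 + Real.sqrt (1 + 3 * Real.sqrt 3 * M)) / Real.sqrt 3 →
      betaW M t < 0) ∧
    (∀ t : ℝ, (1 + Real.sqrt (1 + 3 * Real.sqrt 3 * M)) / Real.sqrt 3 < t →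
      0 < betaW M t) := by
  have h3 : Real.sqrt 3 * Real.sqrt 3 = 3 := Real.mul_self_sqrt (by norm_num)
  have h3pos : (0:ℝ) < Real.sqrt 3 := Real.sqrt_pos.mpr (by norm_num)
  have hMlb : -1 < 3 * Real.sqrt 3 * M := by
    have := (div_lt_iff₀ (by positivity : (0:ℝ) < 3 * Real.sqrt 3)).mp hM
    nlinarith [this]
  have hu0 : (0:ℝ) < 1 + 3 * Real.sqrt 3 * M := by linarith
  set u := Real.sqrt (1 + 3 * Real.sqrt 3 * M) with hu_def
  have hu2 : u ^ 2 = 1 + 3 * Real.sqrt 3 * M := Real.sq_sqrt hu0.le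
  have hupos : 0 < u := Real.sqrt_pos.mpr hu0
  set tA := (1 + u) / Real.sqrt 3 with htA_def
  have htA1 : Real.sqrt 3 * tA = 1 + u := by
    rw [htA_def]; field_simp
  clear_value tA
  clear_value u
  have htAgt : 1 / Real.sqrt 3 < tA := by
    rw [div_lt_iff₀ h3pos]
    nlinarith [htA1, hupos]
  have htA0 : 0 < tA := lt_trans (by positivity) htAgt
  have sq3 : ∀ x : ℝ, 3 * x ^ 2 = (Real.sqrt 3 * x) ^ 2 := fun x => by
    linear_combination (-(x ^ 2)) * h3
  -- tA satisfies √3 tA² - 2 tA - 3M = 0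
  have hPA : Real.sqrt 3 * tA ^ 2 - 2 * tA - 3 * M = 0 := by
    have key : Real.sqrt 3 * (Real.sqrt 3 * tA ^ 2 - 2 * tA - 3 * M) = 0 := by
      linear_combination (Real.sqrt 3 * tA + u - 1) * htA1 + hu2
    rcases mul_eq_zero.mp key with h' | h'
    · exact absurd h' h3pos.ne'
    · exact h'
  -- cubic at tA is positive
  have hcA : 0 < tA ^ 3 - tA - 2 * M := by
    have hid : tA ^ 3 - tA - 2 * M = tA * (1 + 3 * Real.sqrt 3 * M) / 3 := by
      linear_combination (Real.sqrt 3 * tA / 3 + 2 / 3) * hPA - (tA ^ 3 / 3) * h3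
    rw [hid]; positivity
  have htpgt : 1 / Real.sqrt 3 < tp := hp_tp_gt M tp hM htp
  have hcub := hp_cubic_pos M tp htp
  have htpA : 1 < 3 * tA ^ 2 := by
    rw [sq3]; nlinarith [htA1, hupos]
  have htpB : 1 < 3 * tp ^ 2 := by
    have h11 : 1 < tp * Real.sqrt 3 := (div_lt_iff₀ h3pos).mp htpgt
    rw [sq3]; nlinarith [h11]
  have htp0 : 0 < tp := lt_trans (by positivity) htpgt
  -- tp < tA
  have htplt : tp < tA := by
    by_contra hle
    push_neg at hle
    have hroot : tp ^ 3 - tp - 2 * M = 0 := htp.1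
    nlinarith [hcA, hroot, htpA, htpB, htA0, htp0, sub_nonneg.2 hle,
      mul_nonneg (sub_nonneg.2 hle) htA0.le, mul_nonneg (sub_nonneg.2 hle) htp0.le,
      mul_pos htA0 htA0, mul_pos htA0 htp0,
      mul_nonneg (mul_nonneg (sub_nonneg.2 hle) htA0.le) htA0.le]
  refine ⟨htplt, ?_, ?_, ?_⟩
  · obtain ⟨C, hC, hEq⟩ := hp_key_sign M tA hM htAgt hcA
    rw [hEq, hPA, mul_zero]
  · intro t ht htlt
    have ht1 : 1 / Real.sqrt 3 < t := lt_trans htpgt ht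
    obtain ⟨C, hC, hEq⟩ := hp_key_sign M t hM ht1 (hcub t ht)
    rw [hEq]
    have hst : 1 < Real.sqrt 3 * t := by
      have := (div_lt_iff₀ h3pos).mp ht1; linarith
    have hstA : Real.sqrt 3 * t < 1 + u := by
      have := mul_lt_mul_of_pos_left htlt h3pos
      rw [htA1] at this; linarith
    have hPneg : Real.sqrt 3 * t ^ 2 - 2 * t - 3 * M < 0 := by
      have h1 : Real.sqrt 3 * (Real.sqrt 3 * t ^ 2 - 2 * t - 3 * M)
          = (Real.sqrt 3 * t - 1) ^ 2 - u ^ 2 := by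
        linear_combination hu2
      have hx : Real.sqrt 3 * t - 1 < u := by linarith
      have h2 : (Real.sqrt 3 * t - 1) ^ 2 - u ^ 2 < 0 := by
        have := pow_lt_pow_left₀ hx (by linarith : (0:ℝ) ≤ Real.sqrt 3 * t - 1) two_ne_zero
        linarith
      by_contra hP
      push_neg at hP
      have := mul_le_mul_of_nonneg_left hP h3pos.le
      rw [mul_zero] at this
      linarith [h1 ▸ this]
    exact mul_neg_of_pos_of_neg hC hPneg
  · intro t htgt
    have ht1 : 1 / Real.sqrt 3 < t := lt_trans htAgt htgt
    have ht : tp < t := lt_trans htplt htgt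
    obtain ⟨C, hC, hEq⟩ := hp_key_sign M t hM ht1 (hcub t ht)
    rw [hEq]
    have hstA : 1 + u < Real.sqrt 3 * t := by
      have := mul_lt_mul_of_pos_left htgt h3pos
      rw [htA1] at this; linarith
    have hPpos : 0 < Real.sqrt 3 * t ^ 2 - 2 * t - 3 * M := by
      have h1 : Real.sqrt 3 * (Real.sqrt 3 * t ^ 2 - 2 * t - 3 * M)
          = (Real.sqrt 3 * t - 1) ^ 2 - u ^ 2 := by
        linear_combination hu2
      have hx : u < Real.sqrt 3 * t - 1 := by linarith
      have h2 : 0 < (Real.sqrt 3 * t - 1) ^ 2 - u ^ 2 := by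
        have := pow_lt_pow_left₀ hx hupos.le two_ne_zero
        linarith
      by_contra hP
      push_neg at hP
      have := mul_le_mul_of_nonneg_left hP h3pos.le
      rw [mul_zero] at this
      linarith [h1 ▸ this]
    exact mul_pos hC hPpos
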